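/- For all s ∈ [2, 4] and r ∈ [0, 1], the quantity (1 − r^{2s−2}) + (1−s)(r^{s−2} − r^s) is nonnegative for r ∈ (0,1]. -/

import Mathlib

open Real

private lemma key_ineq {s x : ℝ} (hs2 : 2 ≤ s) (hx : 0 < x) :
    s * x ^ (2:ℝ) ≤ 2 * x ^ s + (s - 2) := by
  have hz : (-1:ℝ) ≤ x ^ (2:ℝ) - 1 := by
    have : (0:ℝ) ≤ x ^ (2:ℝ) := Real.rpow_nonneg hx.le _
    linarith
  have hp : (1:ℝ) ≤ s / 2 := by linarith
  have h := one_add_mul_self_le_rpow_one_add hz hp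
  rw [add_sub_cancel] at h
  have hxx : (x ^ (2:ℝ)) ^ (s/2) = x ^ s := by
    rw [← Real.rpow_mul hx.le]
    rw [show 2*(s/2) = s by ring]
  rw [hxx] at h
  nlinarith [h]

private lemma gderiv {s x : ℝ} (hx : 0 < x) :
    HasDerivAt (fun x : ℝ => (1 - x ^ (2 * s - 2)) + (1 - s) * (x ^ (s - 2) - x ^ s))
      (-((2*s-2) * x ^ (2*s-3)) + (1 - s) * ((s-2) * x ^ (s-3) - s * x ^ (s-1))) x := by
  have h1 : HasDerivAt (fun x : ℝ => x ^ (2*s-2)) ((2*s-2) * x ^ (2*s-2-1)) x :=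
    Real.hasDerivAt_rpow_const (Or.inl hx.ne')
  have h2 : HasDerivAt (fun x : ℝ => x ^ (s-2)) ((s-2) * x ^ (s-2-1)) x :=
    Real.hasDerivAt_rpow_const (Or.inl hx.ne')
  have h3 : HasDerivAt (fun x : ℝ => x ^ s) (s * x ^ (s-1)) x :=
    Real.hasDerivAt_rpow_const (Or.inl hx.ne')
  have := ((h1.const_sub 1).add (((h2.sub h3)).const_mul (1 - s)))
  convert this using 2
  · rfl
  · rfl
  · rfl
  all_goals ring_nf

theorem stmt_3 (s r : ℝ) (hs : s ∈ Set.Icc (2 : ℝ) 4) (hr : r ∈ Set.Ioc (0 : ℝ) 1) :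
    0 ≤ (1 - r ^ (2 * s - 2)) + (1 - s) * (r ^ (s - 2) - r ^ s) := by
  obtain ⟨hs2, hs4⟩ := hs
  obtain ⟨hr0, hr1⟩ := hr
  set g : ℝ → ℝ := fun x => (1 - x ^ (2 * s - 2)) + (1 - s) * (x ^ (s - 2) - x ^ s) with hg
  have hanti : AntitoneOn g (Set.Icc r 1) := by
    apply antitoneOn_of_deriv_nonpos (convex_Icc r 1)
    · intro x hx
      exact (gderiv (lt_of_lt_of_le hr0 hx.1)).continuousAt.continuousWithinAt
    · intro x hx
      rw [interior_Icc] at hx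
      exact (gderiv (lt_trans hr0 hx.1)).differentiableAt.differentiableWithinAt
    · intro x hx
      rw [interior_Icc] at hx
      have hxpos : 0 < x := lt_trans hr0 hx.1
      rw [(gderiv hxpos).deriv]
      have key := key_ineq hs2 hxpos
      have e1 : x ^ (2*s-3) = x ^ (s-3) * x ^ s := by
        rw [← Real.rpow_add hxpos]; ring_nf
      have e2 : x ^ (s-1) = x ^ (s-3) * x ^ (2:ℝ) := by
        rw [← Real.rpow_add hxpos]; ring_nf
      have hp3 : (0:ℝ) ≤ x ^ (s-3) := Real.rpow_nonneg hxpos.le _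
      rw [e1, e2]
      nlinarith [mul_nonneg hp3 (sub_nonneg.mpr key), mul_le_mul_of_nonneg_left key hp3]
  have h1 : g 1 = 0 := by simp [hg]
  have := hanti (Set.left_mem_Icc.mpr hr1) (Set.right_mem_Icc.mpr hr1) hr1
  rw [h1] at this
  exact this
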